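/- Given a dual quaternion q = p + εd with p ≠ 0, the product (N(p) − (ε/2)(p·conj(d) + d·conj(p)))·(p + εd) equals N(p)·p + (ε/2)(d·conj(p) − p·conj(d))·p, and this dual quaternion satisfies Study's condition. -/

import Mathlib

open Polynomial TrivSqZeroExt Quaternion

noncomputable section

/-- the ring of dual numbers 𝔻 = ℝ[ε]/⟨ε²⟩ -/
abbrev DD : Type := DualNumber ℝ
/-- the Hamiltonian quaternions ℍ -/
abbrev HH : Type := Quaternion ℝ
/-- the dual quaternions 𝔻ℍ, realized as quaternions over the dual numbers -/
abbrev DH : Type := Quaternion DD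

/-- embedding of the real quaternions into the dual quaternions -/
def ofQ (p : HH) : DH := ⟨inl p.re, inl p.imI, inl p.imJ, inl p.imK⟩

/-- ε as a dual quaternion -/
def εq : DH := ((DualNumber.eps : DD) : DH)

/-- primal part of a dual quaternion -/
def primal (q : DH) : HH := ⟨(q.re).fst, (q.imI).fst, (q.imJ).fst, (q.imK).fst⟩

/-- dual part of a dual quaternion -/
def dualPart (q : DH) : HH := ⟨(q.re).snd, (q.imI).snd, (q.imJ).snd, (q.imK).snd⟩

/-- coefficientwise conjugate of a dual quaternion polynomial -/
def pconj (M : Polynomial DH) : Polynomial DH := ∑ i ∈ M.support, C (star (M.coeff i)) * X ^ i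

/-- coefficientwise conjugate of a quaternion polynomial -/
def qpconj (P : Polynomial HH) : Polynomial HH := ∑ i ∈ P.support, C (star (P.coeff i)) * X ^ i

/-- primal part of a dual quaternion polynomial -/
def Ppart (M : Polynomial DH) : Polynomial HH := ∑ i ∈ M.support, C (primal (M.coeff i)) * X ^ i

/-- dual part of a dual quaternion polynomial -/
def Dpart (M : Polynomial DH) : Polynomial HH := ∑ i ∈ M.support, C (dualPart (M.coeff i)) * X ^ i

/-- primal part of a dual number polynomial -/
def dpr (p : Polynomial DD) : Polynomial ℝ := ∑ i ∈ p.support, C ((p.coeff i).fst) * X ^ i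

/-- the dual number polynomial f + εg built from two real polynomials -/
def dpoly (f g : Polynomial ℝ) : Polynomial DD :=
  f.map (algebraMap ℝ DD) + (DualNumber.eps : DD) • g.map (algebraMap ℝ DD)

/-- embedding of quaternion polynomials into dual quaternion polynomials -/
def toDQp (P : Polynomial HH) : Polynomial DH := ∑ i ∈ P.support, C (ofQ (P.coeff i)) * X ^ i

/-- the quaternion unit i -/
def qi : HH := ⟨0, 1, 0, 0⟩
/-- the quaternion unit j -/
def qj : HH := ⟨0, 0, 1, 0⟩
/-- the quaternion unit k -/
def qk : HH := ⟨0, 0, 0, 1⟩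

lemma ofQ_sub (a b : HH) : ofQ (a - b) = ofQ a - ofQ b := by
  ext <;> simp only [Quaternion.re_sub, Quaternion.imI_sub, Quaternion.imJ_sub, Quaternion.imK_sub] <;> simp [ofQ, inl_sub]

lemma ofQ_mul (a b : HH) : ofQ (a * b) = ofQ a * ofQ b := by
  ext <;>
    simp only [Quaternion.re_mul, Quaternion.imI_mul, Quaternion.imJ_mul,
      Quaternion.imK_mul] <;> simp [ofQ, fst_mul, snd_mul, fst_inl, snd_inl]

lemma eps_sq : εq * εq = 0 := by
  rw [εq, ← Quaternion.coe_mul, DualNumber.eps_mul_eps, Quaternion.coe_zero]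

lemma eps_comm (a : DH) : εq * a = a * εq := Quaternion.coe_commutes _ a

lemma expand_gen {R : Type*} [Ring R] (ε a b c e : R) (h0 : ε * ε = 0)
    (hc : ∀ x : R, ε * x = x * ε) :
    (a - ε*b)*(c + ε*e) = a*c + ε*(a*e - b*c) := by
  have h1 : a*(ε*e) = ε*(a*e) := by rw [← mul_assoc, ← hc, mul_assoc]
  have h2 : ε*b*(ε*e) = 0 := by
    rw [mul_assoc, ← mul_assoc b, ← hc, mul_assoc, ← mul_assoc, h0, zero_mul]
  rw [sub_mul, mul_add, mul_add, h1, h2, mul_sub, mul_assoc ε b c]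
  abel

/-- (N(p) − (ε/2)(p conj d + d conj p))(p + εd) = N(p)p + (ε/2)(d conj p − p conj d)p,
and the result satisfies Study's condition. -/
theorem stmt6 (p d : HH) (hp : p ≠ 0) :
    (ofQ ((normSq p : ℝ) : HH) - εq * ofQ ((2 : ℝ)⁻¹ • (p * star d + d * star p))) *
        (ofQ p + εq * ofQ d) =
      ofQ (normSq p • p) + εq * ofQ ((2 : ℝ)⁻¹ • ((d * star p - p * star d) * p)) ∧
    (normSq p • p) * star ((2 : ℝ)⁻¹ • ((d * star p - p * star d) * p)) +
      ((2 : ℝ)⁻¹ • ((d * star p - p * star d) * p)) * star (normSq p • p) = 0 := by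
  constructor
  · rw [expand_gen εq (ofQ ((normSq p : ℝ) : HH)) (ofQ ((2 : ℝ)⁻¹ • (p * star d + d * star p)))
        (ofQ p) (ofQ d) eps_sq eps_comm,
      ← ofQ_mul ((normSq p : ℝ) : HH) p, ← ofQ_mul ((normSq p : ℝ) : HH) d,
      ← ofQ_mul ((2 : ℝ)⁻¹ • (p * star d + d * star p)) p,
      ← ofQ_sub (((normSq p : ℝ) : HH) * d) (((2 : ℝ)⁻¹ • (p * star d + d * star p)) * p)]
    have h1 : ((normSq p : ℝ) : HH) * p = normSq p • p := Quaternion.coe_mul_eq_smul _ _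
    have h2 : ((normSq p : ℝ) : HH) * d - ((2:ℝ)⁻¹ • (p * star d + d * star p)) * p
        = (2:ℝ)⁻¹ • ((d * star p - p * star d) * p) := by
      ext <;>
        simp only [Quaternion.re_mul, Quaternion.imI_mul, Quaternion.imJ_mul,
          Quaternion.imK_mul, Quaternion.re_star, Quaternion.imI_star, Quaternion.imJ_star,
          Quaternion.imK_star, Quaternion.re_add, Quaternion.imI_add, Quaternion.imJ_add,
          Quaternion.imK_add, Quaternion.re_sub, Quaternion.imI_sub, Quaternion.imJ_sub,
          Quaternion.imK_sub, Quaternion.re_smul, Quaternion.imI_smul, Quaternion.imJ_smul,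
          Quaternion.imK_smul, Quaternion.re_coe, Quaternion.imI_coe, Quaternion.imJ_coe,
          Quaternion.imK_coe, smul_eq_mul, normSq_def'] <;> ring
    rw [h1, h2]
  · ext <;>
      simp only [Quaternion.re_mul, Quaternion.imI_mul, Quaternion.imJ_mul,
        Quaternion.imK_mul, Quaternion.re_star, Quaternion.imI_star, Quaternion.imJ_star,
        Quaternion.imK_star, Quaternion.re_add, Quaternion.imI_add, Quaternion.imJ_add,
        Quaternion.imK_add, Quaternion.re_sub, Quaternion.imI_sub, Quaternion.imJ_sub,
        Quaternion.imK_sub, Quaternion.re_smul, Quaternion.imI_smul, Quaternion.imJ_smul,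
        Quaternion.imK_smul, Quaternion.re_zero, Quaternion.imI_zero, Quaternion.imJ_zero,
        Quaternion.imK_zero, smul_eq_mul, normSq_def'] <;> ring
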